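/- Let G be a finite nonabelian simple group and let x ∈ G be an element contained in exactly one maximal subgroup of G. Then for every h ∈ G with h ≠ 1 there exists a conjugate g of h in G such that the commutator ⁅x, g⁻¹x⁻¹g⁆ is nontrivial. -/

import Mathlib

open scoped commutatorElement

/-- In a finite nonabelian simple group `G`, if `x` lies in exactly one maximal subgroup
of `G`, then for every nontrivial `h ∈ G` there is a conjugate `g` of `h` such that
`⁅x, g⁻¹x⁻¹g⁆ ≠ 1`. -/
theorem statement_17 {G : Type*} [Group G] [Fintype G]
    (hsimple : IsSimpleGroup G) (hnonabelian : ∃ a b : G, a * b ≠ b * a)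
    (x : G) (hx : ∃! M : Subgroup G, IsCoatom M ∧ x ∈ M) :
    ∀ h : G, h ≠ 1 → ∃ g : G, IsConj h g ∧ ⁅x, g⁻¹ * x⁻¹ * g⁆ ≠ 1 := by
  obtain ⟨M, ⟨hMco, hxM⟩, hMuniq⟩ := hx
  intro h hh
  by_contra hcon
  push_neg at hcon
  -- Step 1: every conjugate of x by a conjugate of h lies in M
  have key : ∀ g : G, IsConj h g → g⁻¹ * x * g ∈ M := by
    intro g hg
    have hc : Commute x (g⁻¹ * x⁻¹ * g) :=
      commutatorElement_eq_one_iff_commute.mp (hcon g hg)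
    have hc' : Commute x (g⁻¹ * x * g) := by
      have := hc.inv_right
      simpa [mul_assoc] using this
    rcases eq_or_ne (Subgroup.centralizer {x}) ⊤ with hcent | hcent
    · -- x is central, hence x = 1 since the center is trivial
      have hxcenter : x ∈ Subgroup.center G := by
        rw [Subgroup.mem_center_iff]
        intro g'
        have : g' ∈ Subgroup.centralizer {x} := hcent ▸ Subgroup.mem_top g'
        exact (Subgroup.mem_centralizer_singleton_iff.mp this)
      rcases (Subgroup.center G).normal_of_characteristic.eq_bot_or_eq_top with hb | ht
      · have : x = 1 := by simpa [hb] using hxcenter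
        simpa [this] using M.one_mem
      · obtain ⟨a, b, hab⟩ := hnonabelian
        have : a ∈ Subgroup.center G := ht ▸ Subgroup.mem_top a
        exact absurd (Subgroup.mem_center_iff.mp this b).symm hab
    · -- centralizer of x is proper, so contained in a coatom, which must be M
      rcases (IsCoatomic.eq_top_or_exists_le_coatom (Subgroup.centralizer {x}))
        with ht | ⟨N, hNco, hle⟩
      · exact absurd ht hcent
      · have hxN : x ∈ N := hle (Subgroup.mem_centralizer_singleton_iff.mpr rfl)
        have : N = M := hMuniq N ⟨hNco, hxN⟩
        subst this
        exact hle (Subgroup.mem_centralizer_singleton_iff.mpr hc'.symm.eq)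
  -- Step 2: every conjugate of h normalizes M
  have hnorm : ∀ g : G, IsConj h g → g ∈ Subgroup.normalizer (M : Set G) := by
    intro g hg
    have hmap : (MulEquiv.mapSubgroup (MulAut.conj g)) M = M := by
      apply hMuniq
      constructor
      · exact (OrderIso.isCoatom_iff _ _).mpr hMco
      · refine ⟨g⁻¹ * x * g, key g hg, ?_⟩
        simp [MulAut.conj, mul_assoc]
    rw [Subgroup.mem_normalizer_iff]
    intro n
    constructor
    · intro hn
      have : (MulAut.conj g) n ∈ (MulEquiv.mapSubgroup (MulAut.conj g)) M :=
        Subgroup.mem_map_of_mem _ hn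
      rw [hmap] at this
      simpa [MulAut.conj] using this
    · intro hn
      have : g * n * g⁻¹ ∈ (MulEquiv.mapSubgroup (MulAut.conj g)) M := by
        rw [hmap]; exact hn
      obtain ⟨m, hm, hme⟩ := this
      have : n = m := by
        have : (MulAut.conj g) m = g * n * g⁻¹ := hme
        simp only [MulAut.conj_apply] at this
        exact (mul_left_cancel (mul_right_cancel this)).symm
      exact this ▸ hm
  -- Step 3: M is normal, hence trivial, contradiction
  have hclosure : Subgroup.normalClosure {h} = ⊤ := by
    rcases Subgroup.normalClosure_normal.eq_bot_or_eq_top (G := G) (H := _) with hb | ht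
    · exfalso
      have : h ∈ Subgroup.normalClosure {h} := Subgroup.subset_normalClosure rfl
      rw [hb, Subgroup.mem_bot] at this
      exact hh this
    · exact ht
  have hntop : Subgroup.normalizer (M : Set G) = ⊤ := by
    rw [← top_le_iff, ← hclosure]
    show Subgroup.closure (Group.conjugatesOfSet {h}) ≤ Subgroup.normalizer (M : Set G)
    rw [Subgroup.closure_le]
    intro g hg
    obtain ⟨a, ha, hconj⟩ := Group.mem_conjugatesOfSet_iff.mp hg
    rw [Set.mem_singleton_iff] at ha
    exact hnorm g (ha ▸ hconj)
  have hMnormal : M.Normal := Subgroup.normalizer_eq_top_iff.mp hntop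
  rcases hMnormal.eq_bot_or_eq_top with hb | ht
  · -- M = ⊥ is a coatom: G has only trivial subgroups, hence is abelian
    obtain ⟨a, b, hab⟩ := hnonabelian
    have ha1 : a ≠ 1 := by rintro rfl; simp at hab
    have hzp : Subgroup.zpowers a = ⊤ := by
      apply hMco.2
      rw [hb]
      exact Ne.bot_lt (fun hz => ha1 (by
        have : a ∈ Subgroup.zpowers a := Subgroup.mem_zpowers a
        rwa [hz, Subgroup.mem_bot] at this))
    have : b ∈ Subgroup.zpowers a := hzp ▸ Subgroup.mem_top b
    obtain ⟨n, hn⟩ := this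
    exact hab (by rw [← hn]; simpa using (Commute.zpow_right (Commute.refl a) n).eq)
  · exact hMco.1 ht
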